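/- arXiv:1903.07095 — 2 statements merged into one kernel-verified Lean document; each statement's English description precedes it below -/
import Mathlib

section
/- Let N ≥ 3 be an integer, r ≥ 1, ξ : {1, ..., r+1} → ℂ \ {0}, and let ≺ be the relation defined by: t ≺ t' iff m(ξ(t')·ξ(t)⁻¹) ≡ m(ξ(t')) - m(ξ(t)) (mod N) and (m(ξ(t')·ξ(t)⁻¹) + m(ξ(t)·ξ(t')⁻¹) ≡ 1 (mod N) or t' < t). If t ≺ t', then (ξ(t)·ξ(t')⁻¹)·Å_{1+m(ξ(t))} ⊆ S_{m(ξ(t'))}, where Å_s := exp(2πis/N)·{z ∈ ℂ \ {0} : arg(z) ∈ (-π/(2N), π/(2N))} and S_s := exp(2πis/N)·{z ∈ ℂ \ {0} : arg(z) ∈ [-π/(2N), 5π/(2N))}. -/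
/-- The principal argument of a nonzero complex number, normalized to lie in `[-π, π)`. -/
noncomputable def parg (z : ℂ) : ℝ :=
  if Complex.arg z = Real.pi then -Real.pi else Complex.arg z

/-- `m(z) := ⌈-N·arg(z)/(2π)⌉` where `arg(z) ∈ [-π, π)`. -/
noncomputable def mfun (N : ℤ) (z : ℂ) : ℤ :=
  ⌈(-(N : ℝ) * parg z) / (2 * Real.pi)⌉

/-- The rotation `exp(2πis/N)`. -/
noncomputable def rot (N s : ℤ) : ℂ :=
  Complex.exp (2 * Real.pi * Complex.I * (s : ℂ) / (N : ℂ))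

/-- The sector `S_s := exp(2πis/N)·{z ≠ 0 : arg z ∈ [-π/(2N), 5π/(2N))}`. -/
noncomputable def Ssec (N s : ℤ) : Set ℂ :=
  (fun w => rot N s * w) ''
    {z | z ≠ 0 ∧ parg z ∈ Set.Ico (-(Real.pi / (2 * (N : ℝ)))) (5 * Real.pi / (2 * (N : ℝ)))}

/-- The open arm `Å_s := exp(2πis/N)·{z ≠ 0 : arg z ∈ (-π/(2N), π/(2N))}`. -/
noncomputable def Aop (N s : ℤ) : Set ℂ :=
  (fun w => rot N s * w) ''
    {z | z ≠ 0 ∧ parg z ∈ Set.Ioo (-(Real.pi / (2 * (N : ℝ)))) (Real.pi / (2 * (N : ℝ)))}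

/-- `t ≺ t'` iff `m(ξ(t')·ξ(t)⁻¹) ≡ m(ξ(t')) - m(ξ(t)) (mod N)` and, in addition,
`m(ξ(t')·ξ(t)⁻¹) + m(ξ(t)·ξ(t')⁻¹) ≡ 1 (mod N)` or `t' < t`. -/
def prec (N : ℤ) (ξ : ℕ → ℂ) (t t' : ℕ) : Prop :=
  mfun N (ξ t' * (ξ t)⁻¹) ≡ mfun N (ξ t') - mfun N (ξ t) [ZMOD N] ∧
  (mfun N (ξ t' * (ξ t)⁻¹) + mfun N (ξ t * (ξ t')⁻¹) ≡ 1 [ZMOD N] ∨ t' < t)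

lemma parg_mem_Ico (z : ℂ) : parg z ∈ Set.Ico (-Real.pi) Real.pi := by
  unfold parg
  have h := Complex.arg_mem_Ioc z
  split_ifs with hp
  · exact ⟨le_rfl, by linarith [Real.pi_pos]⟩
  · exact ⟨h.1.le, lt_of_le_of_ne h.2 hp⟩

lemma exp_parg_mul_I (z : ℂ) :
    Complex.exp ((parg z : ℂ) * Complex.I) = Complex.exp ((Complex.arg z : ℂ) * Complex.I) := by
  unfold parg
  split_ifs with hp
  · rw [hp]
    push_cast
    rw [neg_mul, Complex.exp_neg, Complex.exp_pi_mul_I]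
    norm_num
  · rfl

lemma abs_mul_exp_parg (z : ℂ) :
    ((‖z‖ : ℝ) : ℂ) * Complex.exp ((parg z : ℂ) * Complex.I) = z := by
  rw [exp_parg_mul_I, Complex.norm_mul_exp_arg_mul_I]

lemma mfun_bounds (N : ℤ) (hN : (0:ℝ) < (N:ℝ)) (z : ℂ) :
    -(2 * Real.pi * ((mfun N z : ℤ) : ℝ)) / (N:ℝ) ≤ parg z ∧
      parg z < 2 * Real.pi * (1 - ((mfun N z : ℤ) : ℝ)) / (N:ℝ) := by
  have hπ := Real.pi_pos
  have h1 := Int.le_ceil ((-(N:ℝ) * parg z) / (2 * Real.pi))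
  have h2 := Int.ceil_lt_add_one ((-(N:ℝ) * parg z) / (2 * Real.pi))
  set m : ℝ := ((mfun N z : ℤ) : ℝ) with hm
  have hm1 : (-(N:ℝ) * parg z) / (2 * Real.pi) ≤ m := h1
  have hm2 : m < (-(N:ℝ) * parg z) / (2 * Real.pi) + 1 := h2
  have key1 : -(N:ℝ) * parg z ≤ 2 * Real.pi * m := by
    rw [div_le_iff₀ (by positivity)] at hm1; linarith
  have hm2' : m - 1 < (-(N:ℝ) * parg z) / (2 * Real.pi) := by linarith
  have key2 : (m - 1) * (2 * Real.pi) < -(N:ℝ) * parg z := by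
    rwa [lt_div_iff₀ (by positivity)] at hm2' 
  constructor
  · rw [div_le_iff₀ hN]; nlinarith
  · rw [lt_div_iff₀ hN]; nlinarith

lemma rot_ne_zero (N s : ℤ) : rot N s ≠ 0 := Complex.exp_ne_zero _

lemma rot_mul (N : ℤ) (s u : ℤ) : rot N s * rot N u = rot N (s + u) := by
  unfold rot
  rw [← Complex.exp_add]
  congr 1
  push_cast
  ring

lemma rot_congr (N : ℤ) {s u : ℤ} (hd : N ∣ s - u) : rot N s = rot N u := by
  obtain ⟨c, hc⟩ := hd
  have hs : s = u + N * c := by linarith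
  subst hs
  rw [← rot_mul]
  have : rot N (N * c) = 1 := by
    unfold rot
    by_cases hN : (N:ℂ) = 0
    · have : N = 0 := by exact_mod_cast hN
      subst this
      simp
    · have he : 2 * (Real.pi:ℂ) * Complex.I * ((N * c : ℤ) : ℂ) / (N:ℂ)
          = (c:ℂ) * (2 * (Real.pi:ℂ) * Complex.I) := by
        push_cast
        field_simp
      rw [he, Complex.exp_int_mul_two_pi_mul_I]
  rw [this, mul_one]

lemma rot_eq_exp (N s : ℤ) : rot N s
    = Complex.exp (((2 * Real.pi * ((s:ℤ):ℝ) / ((N:ℤ):ℝ) : ℝ) : ℂ) * Complex.I) := by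
  unfold rot
  congr 1
  push_cast
  ring

lemma parg_of_pos_mul_exp (r : ℝ) (hr : 0 < r) (α : ℝ) (h1 : -Real.pi < α)
    (h2 : α < Real.pi) :
    parg ((r : ℂ) * Complex.exp ((α : ℂ) * Complex.I)) = α := by
  have harg : Complex.arg ((r : ℂ) * Complex.exp ((α : ℂ) * Complex.I)) = α := by
    rw [Complex.exp_mul_I, Complex.arg_real_mul _ hr]
    exact Complex.arg_cos_add_sin_mul_I ⟨h1, h2.le⟩
  unfold parg
  rw [harg]
  split_ifs with hp
  · exact absurd hp (ne_of_lt h2)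
  · rfl

theorem stmt8 (N : ℤ) (hN : 3 ≤ N) (r : ℕ) (hr : 1 ≤ r) (ξ : ℕ → ℂ)
    (hξ : ∀ s ∈ Finset.Icc 1 (r + 1), ξ s ≠ 0)
    (t t' : ℕ) (ht : t ∈ Finset.Icc 1 (r + 1)) (ht' : t' ∈ Finset.Icc 1 (r + 1))
    (h : prec N ξ t t') :
    (fun w => (ξ t * (ξ t')⁻¹) * w) '' Aop N (1 + mfun N (ξ t)) ⊆ Ssec N (mfun N (ξ t')) := by
  have hπ := Real.pi_pos
  have hNR : (0:ℝ) < (N:ℝ) := by exact_mod_cast (by linarith : (0:ℤ) < N)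
  have hNR3 : (3:ℝ) ≤ (N:ℝ) := by exact_mod_cast hN
  have hξt : ξ t ≠ 0 := hξ t ht
  have hξt' : ξ t' ≠ 0 := hξ t' ht'
  set a := mfun N (ξ t) with ha
  set b := mfun N (ξ t') with hb
  set u := ξ t' * (ξ t)⁻¹ with hu
  have hune : u ≠ 0 := mul_ne_zero hξt' (inv_ne_zero hξt)
  set k := mfun N u with hk
  have hdvd : N ∣ (1 + a - b) - (1 - k) := by
    have h1 : N ∣ (b - a) - k := h.1.dvd
    obtain ⟨c, hc⟩ := h1
    exact ⟨-c, by linarith⟩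
  rintro w ⟨v, ⟨z, ⟨hz0, hzl, hzr⟩, rfl⟩, rfl⟩
  -- set up angles
  set θ := parg u with hθ
  set γ := parg z with hγ
  set β : ℝ := 2 * Real.pi * (1 - ((k:ℤ):ℝ)) / ((N:ℤ):ℝ) with hβ
  obtain ⟨hθ1, hθ2⟩ := mfun_bounds N hNR u
  set α : ℝ := β - θ + γ with hα
  -- angle facts
  have hsum : β + 2 * Real.pi * ((k:ℤ):ℝ) / (N:ℝ) = 2 * Real.pi / (N:ℝ) := by
    rw [hβ]
    field_simp
    ring
  have hθ1' : -(2 * Real.pi * ((k:ℤ):ℝ) / (N:ℝ)) ≤ θ := by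
    rw [← neg_div]; exact hθ1
  have hbd1 : 0 < β - θ := by
    have := hθ2; rw [← hβ] at this; linarith
  have hbd2 : β - θ ≤ 2 * Real.pi / (N:ℝ) := by linarith
  have hγl : -(Real.pi / (2 * (N:ℝ))) < γ := hzl
  have hγr : γ < Real.pi / (2 * (N:ℝ)) := hzr
  have h2N : (0:ℝ) < 2 * (N:ℝ) := by linarith
  have hfrac : 2 * Real.pi / (N:ℝ) + Real.pi / (2 * (N:ℝ)) = 5 * Real.pi / (2 * (N:ℝ)) := by
    field_simp; ring
  have hαu : α < 5 * Real.pi / (2 * (N:ℝ)) := by rw [hα, ← hfrac]; linarith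
  have hαl : -(Real.pi / (2 * (N:ℝ))) < α := by rw [hα]; linarith
  have hsmall : Real.pi / (2 * (N:ℝ)) ≤ Real.pi := by
    rw [div_le_iff₀ h2N]; nlinarith
  have hsmall2 : 5 * Real.pi / (2 * (N:ℝ)) < Real.pi := by
    rw [div_lt_iff₀ h2N]; nlinarith
  have hαl' : -Real.pi < α := by linarith
  have hαu' : α < Real.pi := by linarith
  -- the witness
  refine ⟨(ξ t * (ξ t')⁻¹) * (rot N (1 + a - b) * z), ⟨?_, ?_⟩, ?_⟩
  · exact mul_ne_zero (mul_ne_zero hξt (inv_ne_zero hξt')) (mul_ne_zero (rot_ne_zero N _) hz0)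
  · -- parg of the witness lies in the Ico
    have habsu : (0:ℝ) < ‖u‖ := by
      simpa using norm_pos_iff.mpr hune
    have habsz : (0:ℝ) < ‖z‖ := by
      simpa using norm_pos_iff.mpr hz0
    have hinv : ξ t * (ξ t')⁻¹ = u⁻¹ := by
      rw [hu, mul_inv, inv_inv, mul_comm]
    have hrotk : rot N (1 + a - b) = rot N (1 - k) := rot_congr N hdvd
    have hexpθ : Complex.exp ((θ:ℂ) * Complex.I) ≠ 0 := Complex.exp_ne_zero _
    have hkey : (ξ t * (ξ t')⁻¹) * (rot N (1 + a - b) * z)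
        = (((‖u‖)⁻¹ * ‖z‖ : ℝ) : ℂ)
          * Complex.exp ((α : ℂ) * Complex.I) := by
      rw [hinv, hrotk, rot_eq_exp]
      have hz' : z = ((‖z‖ : ℝ) : ℂ) * Complex.exp ((γ:ℂ) * Complex.I) :=
        (abs_mul_exp_parg z).symm
      have hu' : u = ((‖u‖ : ℝ) : ℂ) * Complex.exp ((θ:ℂ) * Complex.I) :=
        (abs_mul_exp_parg u).symm
      conv_lhs => rw [hu', hz']
      have hexpα : Complex.exp ((α : ℂ) * Complex.I)
          = Complex.exp (((2 * Real.pi * ((1 - k : ℤ):ℝ) / ((N:ℤ):ℝ) : ℝ):ℂ) * Complex.I)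
            * Complex.exp (-((θ:ℂ) * Complex.I)) * Complex.exp ((γ:ℂ) * Complex.I) := by
        rw [← Complex.exp_add, ← Complex.exp_add]
        congr 1
        have : α = 2 * Real.pi * ((1 - k : ℤ):ℝ) / ((N:ℤ):ℝ) - θ + γ := by
          rw [hα, hβ]; push_cast; ring
        rw [this]
        push_cast
        ring
      rw [hexpα, Complex.exp_neg]
      push_cast
      field_simp
    rw [hkey, parg_of_pos_mul_exp _ (by positivity) _ hαl' hαu']
    exact ⟨hαl.le, hαu⟩
  · show rot N b * _ = _
    have hrm : rot N b * rot N (1 + a - b) = rot N (1 + a) := by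
      rw [rot_mul]; congr 1; ring
    calc rot N b * ((ξ t * (ξ t')⁻¹) * (rot N (1 + a - b) * z))
        = (ξ t * (ξ t')⁻¹) * ((rot N b * rot N (1 + a - b)) * z) := by ring
      _ = (fun w => (ξ t * (ξ t')⁻¹) * w) (rot N (1 + a) * z) := by rw [hrm]
end

section
/- Let N ≥ 3, r ≥ 1, and fix nonzero complex numbers z_1, ..., z_r. For a permutation σ of {1,...,r} and 1 ≤ t ≤ r+1, set f_{t,σ} := ∏_{j=1}^{t-1} z_{σ(j)} (empty product = 1) and ξ_σ(t) := f_{t,σ}·f_{r+1,σ}⁻¹; let ≺_σ be the order on {1,...,r+1} defined from ξ_σ. Define the permutation σ̃ by σ̃(1) := σ(r) and σ̃(j) := σ(j-1) for 2 ≤ j ≤ r, and let B_σ := {1 ≤ t ≤ r+1 : m(z_{σ(r)}·ξ_σ(t)) ≡ m(z_{σ(r)}) + m(ξ_σ(t)) (mod N)}. Then for all t, t' ∈ {1,...,r}: if both t, t' ∈ B_σ, or both t, t' ∉ B_σ, then t ≺_σ t' if and only if t+1 ≺_{σ̃} t'+1. -/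
/-- `f_{t,s} := ∏_{j=1}^{t-1} z_{s(j)}` (empty product for `t = 1`). -/
def fprod (z : ℕ → ℂ) (s : ℕ → ℕ) (t : ℕ) : ℂ :=
  ∏ j ∈ Finset.Icc 1 (t - 1), z (s j)

/-- `ξ_s(t) := f_{t,s}·f_{r+1,s}⁻¹`. -/
noncomputable def xi (r : ℕ) (z : ℕ → ℂ) (s : ℕ → ℕ) (t : ℕ) : ℂ :=
  fprod z s t * (fprod z s (r + 1))⁻¹

/-- `t ∈ B_σ` iff `m(z_{σ(r)}·ξ_σ(t)) ≡ m(z_{σ(r)}) + m(ξ_σ(t)) (mod N)`. -/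
def Bmem (N : ℤ) (r : ℕ) (z : ℕ → ℂ) (σ : ℕ → ℕ) (t : ℕ) : Prop :=
  mfun N (z (σ r) * xi r z σ t) ≡ mfun N (z (σ r)) + mfun N (xi r z σ t) [ZMOD N]

lemma parg_lt_pi (z : ℂ) : parg z < Real.pi := by
  unfold parg
  split_ifs with h
  · linarith [Real.pi_pos]
  · exact lt_of_le_of_ne (Complex.arg_le_pi z) h

lemma neg_pi_le_parg (z : ℂ) : -Real.pi ≤ parg z := by
  unfold parg
  split_ifs with h
  · exact le_refl _
  · exact (Complex.neg_pi_lt_arg z).le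

lemma parg_coe (z : ℂ) : (parg z : Real.Angle) = (Complex.arg z : Real.Angle) := by
  unfold parg
  split_ifs with h
  · rw [h, Real.Angle.angle_eq_iff_two_pi_dvd_sub]
    exact ⟨-1, by push_cast; ring⟩
  · rfl

lemma parg_mul (x y : ℂ) (hx : x ≠ 0) (hy : y ≠ 0) :
    ∃ k : ℤ, (k = -1 ∨ k = 0 ∨ k = 1) ∧
      parg (x * y) = parg x + parg y + 2 * Real.pi * k := by
  have h : (parg (x * y) : Real.Angle) = ((parg x + parg y : ℝ) : Real.Angle) := by
    rw [parg_coe, Complex.arg_mul_coe_angle hx hy, Real.Angle.coe_add, parg_coe, parg_coe]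
  rw [Real.Angle.angle_eq_iff_two_pi_dvd_sub] at h
  obtain ⟨k, hk⟩ := h
  have pi := Real.pi_pos
  have b1 := parg_lt_pi (x * y); have b2 := neg_pi_le_parg (x * y)
  have b3 := parg_lt_pi x; have b4 := neg_pi_le_parg x
  have b5 := parg_lt_pi y; have b6 := neg_pi_le_parg y
  have hub : 2 * Real.pi * (k : ℝ) < 3 * Real.pi := by linarith
  have hlb : -(3 * Real.pi) < 2 * Real.pi * (k : ℝ) := by linarith
  have hk1 : (k : ℝ) < 2 := by nlinarith
  have hk2 : (-2 : ℝ) < (k : ℝ) := by nlinarith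
  have hk1' : k < 2 := by exact_mod_cast hk1
  have hk2' : (-2 : ℤ) < k := by exact_mod_cast hk2
  exact ⟨k, by omega, by linarith⟩

lemma mfun_mul (N : ℤ) (x y : ℂ) (hx : x ≠ 0) (hy : y ≠ 0) :
    mfun N (x * y) - mfun N x - mfun N y ≡ 0 [ZMOD N] ∨
    mfun N (x * y) - mfun N x - mfun N y ≡ -1 [ZMOD N] := by
  obtain ⟨k, _, heq⟩ := parg_mul x y hx hy
  have pi := Real.pi_ne_zero
  set X := (-(N : ℝ) * parg x) / (2 * Real.pi) with hX
  set Y := (-(N : ℝ) * parg y) / (2 * Real.pi) with hY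
  have hxy : (-(N : ℝ) * parg (x * y)) / (2 * Real.pi) = X + Y + ((-(N * k) : ℤ) : ℝ) := by
    rw [heq, hX, hY]; push_cast; field_simp; ring
  have hm : mfun N (x * y) = ⌈X + Y⌉ + (-(N * k)) := by
    unfold mfun; rw [hxy, Int.ceil_add_intCast]
  have hx' : mfun N x = ⌈X⌉ := rfl
  have hy' : mfun N y = ⌈Y⌉ := rfl
  have hub : ⌈X + Y⌉ ≤ ⌈X⌉ + ⌈Y⌉ := by
    apply Int.ceil_le.mpr; push_cast
    linarith [Int.le_ceil X, Int.le_ceil Y]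
  have hlb : (⌈X⌉ + ⌈Y⌉ - 2 : ℤ) < ⌈X + Y⌉ := by
    rw [Int.lt_ceil]; push_cast
    linarith [Int.ceil_lt_add_one X, Int.ceil_lt_add_one Y]
  have hδ : mfun N (x * y) - mfun N x - mfun N y ≡ ⌈X + Y⌉ - ⌈X⌉ - ⌈Y⌉ [ZMOD N] := by
    rw [Int.modEq_iff_dvd]
    exact ⟨k, by rw [hm, hx', hy']; ring⟩
  rcases (by omega : ⌈X + Y⌉ - ⌈X⌉ - ⌈Y⌉ = 0 ∨ ⌈X + Y⌉ - ⌈X⌉ - ⌈Y⌉ = -1) with h | h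
  · rw [h] at hδ; exact Or.inl hδ
  · rw [h] at hδ; exact Or.inr hδ

lemma prod_shift (r : ℕ) (z : ℕ → ℂ) (σ σt : ℕ → ℕ)
    (hσt1 : σt 1 = σ r) (hσtj : ∀ j, 2 ≤ j → j ≤ r → σt j = σ (j - 1)) :
    ∀ t, 1 ≤ t → t ≤ r →
      (∏ j ∈ Finset.Icc 1 t, z (σt j)) = z (σ r) * ∏ j ∈ Finset.Icc 1 (t - 1), z (σ j) := by
  intro t h1
  induction t, h1 using Nat.le_induction with
  | base => intro _; simp [hσt1]
  | succ n hn ih =>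
    intro hle
    rw [Finset.prod_Icc_succ_top (by omega) fun j => z (σt j)]
    rw [ih (by omega), hσtj (n + 1) (by omega) hle]
    obtain ⟨m, rfl⟩ : ∃ m, n = m + 1 := ⟨n - 1, by omega⟩
    simp only [Nat.add_sub_cancel]
    rw [Finset.prod_Icc_succ_top (by omega) fun j => z (σ j)]
    ring

lemma xi_shift (r : ℕ) (hr : 1 ≤ r) (z : ℕ → ℂ) (σ σt : ℕ → ℕ)
    (hσt1 : σt 1 = σ r) (hσtj : ∀ j, 2 ≤ j → j ≤ r → σt j = σ (j - 1))
    (t : ℕ) (h1 : 1 ≤ t) (h2 : t ≤ r) :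
    xi r z σt (t + 1) = z (σ r) * xi r z σ t := by
  have hp := prod_shift r z σ σt hσt1 hσtj
  have hf1 : fprod z σt (t + 1) = z (σ r) * fprod z σ t := by
    unfold fprod
    simpa using hp t h1 h2
  have hfr : fprod z σt (r + 1) = fprod z σ (r + 1) := by
    unfold fprod
    simp only [Nat.add_sub_cancel]
    rw [hp r hr le_rfl]
    obtain ⟨m, rfl⟩ : ∃ m, r = m + 1 := ⟨r - 1, by omega⟩
    simp only [Nat.add_sub_cancel]
    rw [Finset.prod_Icc_succ_top (by omega) fun j => z (σ j)]
    ring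
  unfold xi
  rw [hf1, hfr, mul_assoc]

theorem stmt9 (N : ℤ) (hN : 3 ≤ N) (r : ℕ) (hr : 1 ≤ r)
    (z : ℕ → ℂ) (hz : ∀ j ∈ Finset.Icc 1 r, z j ≠ 0)
    (σ : ℕ → ℕ) (hσ : Set.BijOn σ (Set.Icc 1 r) (Set.Icc 1 r))
    (σt : ℕ → ℕ) (hσt1 : σt 1 = σ r) (hσtj : ∀ j, 2 ≤ j → j ≤ r → σt j = σ (j - 1))
    (t t' : ℕ) (ht : t ∈ Finset.Icc 1 r) (ht' : t' ∈ Finset.Icc 1 r)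
    (hB : (Bmem N r z σ t ∧ Bmem N r z σ t') ∨ (¬ Bmem N r z σ t ∧ ¬ Bmem N r z σ t')) :
    prec N (xi r z σ) t t' ↔ prec N (xi r z σt) (t + 1) (t' + 1) := by
  simp only [Finset.mem_Icc] at ht ht'
  have hσr : σ r ∈ Set.Icc 1 r := hσ.mapsTo ⟨hr, le_rfl⟩
  have hc : z (σ r) ≠ 0 := hz _ (Finset.mem_Icc.mpr ⟨hσr.1, hσr.2⟩)
  have hfne : ∀ s, s ≤ r + 1 → fprod z σ s ≠ 0 := by
    intro s hs
    unfold fprod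
    apply Finset.prod_ne_zero_iff.mpr
    intro j hj
    simp only [Finset.mem_Icc] at hj
    have hmem : σ j ∈ Set.Icc 1 r := hσ.mapsTo ⟨hj.1, by omega⟩
    exact hz _ (Finset.mem_Icc.mpr ⟨hmem.1, hmem.2⟩)
  have hxine : ∀ s, s ≤ r + 1 → xi r z σ s ≠ 0 := fun s hs =>
    mul_ne_zero (hfne s hs) (inv_ne_zero (hfne _ le_rfl))
  have hx0 : xi r z σ t ≠ 0 := hxine t (by omega)
  have hx0' : xi r z σ t' ≠ 0 := hxine t' (by omega)
  have hxt : xi r z σt (t + 1) = z (σ r) * xi r z σ t :=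
    xi_shift r hr z σ σt hσt1 hσtj t ht.1 ht.2
  have hxt' : xi r z σt (t' + 1) = z (σ r) * xi r z σ t' :=
    xi_shift r hr z σ σt hσt1 hσtj t' ht'.1 ht'.2
  have hrat : xi r z σt (t' + 1) * (xi r z σt (t + 1))⁻¹
      = xi r z σ t' * (xi r z σ t)⁻¹ := by
    rw [hxt, hxt', mul_inv, mul_mul_mul_comm, mul_inv_cancel₀ hc, one_mul]
  have hrat' : xi r z σt (t + 1) * (xi r z σt (t' + 1))⁻¹
      = xi r z σ t * (xi r z σ t')⁻¹ := by
    rw [hxt, hxt', mul_inv, mul_mul_mul_comm, mul_inv_cancel₀ hc, one_mul]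
  -- the key congruence
  have hd := mfun_mul N (z (σ r)) (xi r z σ t) hc hx0
  have hd' := mfun_mul N (z (σ r)) (xi r z σ t') hc hx0'
  unfold Bmem at hB
  have hdd : mfun N (z (σ r) * xi r z σ t) - mfun N (z (σ r)) - mfun N (xi r z σ t)
      ≡ mfun N (z (σ r) * xi r z σ t') - mfun N (z (σ r)) - mfun N (xi r z σ t')
      [ZMOD N] := by
    rcases hB with ⟨h1, h2⟩ | ⟨h1, h2⟩
    · rw [Int.modEq_iff_dvd] at h1 h2 ⊢
      obtain ⟨k1, e1⟩ := h1
      obtain ⟨k2, e2⟩ := h2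
      exact ⟨k1 - k2, by linear_combination e1 - e2⟩
    · have hδ : mfun N (z (σ r) * xi r z σ t) - mfun N (z (σ r)) - mfun N (xi r z σ t)
          ≡ -1 [ZMOD N] := by
        refine hd.resolve_left fun h0 => h1 (Int.modEq_iff_dvd.mpr ?_)
        obtain ⟨k, hk⟩ := Int.modEq_iff_dvd.mp h0
        exact ⟨k, by linear_combination hk⟩
      have hδ' : mfun N (z (σ r) * xi r z σ t') - mfun N (z (σ r)) - mfun N (xi r z σ t')
          ≡ -1 [ZMOD N] := by
        refine hd'.resolve_left fun h0 => h2 (Int.modEq_iff_dvd.mpr ?_)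
        obtain ⟨k, hk⟩ := Int.modEq_iff_dvd.mp h0
        exact ⟨k, by linear_combination hk⟩
      exact hδ.trans hδ'.symm
  have key : mfun N (z (σ r) * xi r z σ t') - mfun N (z (σ r) * xi r z σ t)
      ≡ mfun N (xi r z σ t') - mfun N (xi r z σ t) [ZMOD N] := by
    rw [Int.modEq_iff_dvd] at hdd ⊢
    obtain ⟨k, hk⟩ := hdd
    exact ⟨-k, by linear_combination -hk⟩
  have hord : t' < t ↔ t' + 1 < t + 1 := by omega
  unfold prec
  rw [hrat, hrat', hxt, hxt']
  constructor
  · rintro ⟨ha, hb⟩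
    exact ⟨ha.trans key.symm, hb.imp id hord.mp⟩
  · rintro ⟨ha, hb⟩
    exact ⟨ha.trans key, hb.imp id hord.mpr⟩
end
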